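/- Consider permutations of {1,...,t} in bijection with 'worm diagrams': for each sigma in S_t there is exactly one worm diagram of size t whose i-th worm has length t+1-sigma(i). Hence the number of worm diagrams of size t (equivalently, of full exceptional sequences of A_t-modules) is t!. -/

import Mathlib

/-- The vertex list of a worm: starting from `start`, each step moves one lattice
unit left (`true`) or down (`false`); equivalently, read backwards, each step of the
worm goes right or up. -/
def wormPath : ℤ × ℤ → List Bool → List (ℤ × ℤ)
  | p, [] => [p]
  | p, b :: rest =>
      p :: wormPath (if b then (p.1 - 1, p.2) else (p.1, p.2 - 1)) rest

/-- A worm diagram of size `t`: a graph on the lattice triangle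
`{(m,n) : m,n ≥ 1, m+n ≤ t+1}` whose edges lie on grid lines and whose connected
components are `t` monotone lattice paths (worms) of lengths `1, 2, ..., t`
(in some order), the `i`-th worm starting at the diagonal point `(i, t+1-i)`. -/
structure WormDiagram (t : ℕ) where
  /-- the steps of the `i`-th worm (here `i : Fin t` encodes the worm with
  diagonal point `(i+1, t-i)`) -/
  steps : Fin t → List Bool
  /-- the worm lengths (numbers of vertices) are `1, ..., t` in some order -/
  lengths_perm : ∃ π : Equiv.Perm (Fin t), ∀ i, (steps i).length = (π i : ℕ)
  /-- the worms exhaust exactly the triangle -/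
  cover : ∀ p : ℤ × ℤ,
    (1 ≤ p.1 ∧ 1 ≤ p.2 ∧ p.1 + p.2 ≤ (t : ℤ) + 1) ↔
      ∃ i : Fin t, p ∈ wormPath (((i : ℕ) : ℤ) + 1, (t : ℤ) - (i : ℕ)) (steps i)
  /-- distinct worms are disjoint -/
  disjoint : ∀ i j : Fin t, i ≠ j →
    ∀ p : ℤ × ℤ, p ∈ wormPath (((i : ℕ) : ℤ) + 1, (t : ℤ) - (i : ℕ)) (steps i) →
      p ∉ wormPath (((j : ℕ) : ℤ) + 1, (t : ℤ) - (j : ℕ)) (steps j)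


section Worm
open Finset

set_option linter.unusedVariables false

set_option linter.unnecessarySeqFocus false

section Worm
open Finset


lemma mem_wormPath_iff (L : List Bool) (p q : ℤ × ℤ) :
    q ∈ wormPath p L ↔ ∃ k ≤ L.length,
      q = (p.1 - ((L.take k).count true : ℤ),
           p.2 - ((k : ℤ) - ((L.take k).count true : ℤ))) := by
  induction L generalizing p with
  | nil =>
      simp only [wormPath, List.mem_singleton, List.length_nil, Nat.le_zero]
      constructor
      · rintro rfl; exact ⟨0, rfl, by simp⟩
      · rintro ⟨k, rfl, h⟩; simpa using h
  | cons b L ih =>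
      simp only [wormPath, List.mem_cons, ih]
      constructor
      · rintro (rfl | ⟨k, hk, rfl⟩)
        · exact ⟨0, by simp, by simp⟩
        · refine ⟨k + 1, by simpa using Nat.succ_le_succ hk, ?_⟩
          cases b <;>
            simp only [List.take_succ_cons, List.count_cons, if_pos, if_neg,
              Bool.false_eq_true, ite_true, ite_false] <;>
            · apply Prod.ext <;> push_cast <;> simp <;> ring
      · rintro ⟨k, hk, rfl⟩
        cases k with
        | zero => left; simp
        | succ k =>
            right
            refine ⟨k, by simpa using hk, ?_⟩
            cases b <;>
              simp only [List.take_succ_cons, List.count_cons, Bool.false_eq_true,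
                ite_true, ite_false] <;>
              · apply Prod.ext <;> push_cast <;> simp <;> ring

variable {t : ℕ}


variable {t : ℕ}

/-- card of `{j : j < a, k ≤ π j}` -/
def Mfn (π : Equiv.Perm (Fin t)) (a k : ℕ) : ℕ :=
  ((Finset.univ : Finset (Fin t)).filter (fun j : Fin t => (j : ℕ) < a ∧ k ≤ (π j : ℕ))).card

lemma filter_succ_card (Q : Fin t → Prop) [DecidablePred Q] (a : ℕ) :
    ((Finset.univ : Finset (Fin t)).filter (fun j : Fin t => (j : ℕ) < a + 1 ∧ Q j)).card =
      ((Finset.univ : Finset (Fin t)).filter (fun j : Fin t => (j : ℕ) < a ∧ Q j)).card +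
        (if h : a < t then (if Q ⟨a, h⟩ then 1 else 0) else 0) := by
  by_cases ha : a < t
  · by_cases hQ : Q ⟨a, ha⟩
    · rw [dif_pos ha, if_pos hQ]
      have : (Finset.univ : Finset (Fin t)).filter (fun j : Fin t => (j : ℕ) < a + 1 ∧ Q j) =
          insert ⟨a, ha⟩ ((Finset.univ : Finset (Fin t)).filter (fun j : Fin t => (j : ℕ) < a ∧ Q j)) := by
        ext j
        simp only [mem_filter, mem_univ, true_and, mem_insert]
        constructor
        · rintro ⟨h1, h2⟩
          rcases Nat.lt_succ_iff_lt_or_eq.mp h1 with h | h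
          · exact Or.inr ⟨h, h2⟩
          · exact Or.inl (Fin.ext h)
        · rintro (rfl | ⟨h1, h2⟩)
          · exact ⟨Nat.lt_succ_self _, hQ⟩
          · exact ⟨Nat.lt_succ_of_lt h1, h2⟩
      rw [this, card_insert_of_notMem (by simp), Nat.add_comm]
    · rw [dif_pos ha, if_neg hQ, add_zero]
      congr 1
      ext j
      simp only [mem_filter, mem_univ, true_and]
      constructor
      · rintro ⟨h1, h2⟩
        rcases Nat.lt_succ_iff_lt_or_eq.mp h1 with h | h
        · exact ⟨h, h2⟩
        · exact absurd h2 (by rwa [show j = ⟨a, ha⟩ from Fin.ext h])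
      · rintro ⟨h1, h2⟩; exact ⟨Nat.lt_succ_of_lt h1, h2⟩
  · rw [dif_neg ha, add_zero]
    congr 1
    ext j
    have hj : (j : ℕ) < a := lt_of_lt_of_le j.isLt (le_of_not_gt ha)
    simp only [mem_filter, mem_univ, true_and]
    constructor
    · rintro ⟨_, h2⟩; exact ⟨hj, h2⟩
    · rintro ⟨_, h2⟩; exact ⟨Nat.lt_succ_of_lt hj, h2⟩

lemma Mfn_zero (π : Equiv.Perm (Fin t)) (k : ℕ) : Mfn π 0 k = 0 := by
  simp [Mfn]

lemma Mfn_succ (π : Equiv.Perm (Fin t)) (a k : ℕ) (h : a < t) :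
    Mfn π (a + 1) k = Mfn π a k + (if k ≤ (π ⟨a, h⟩ : ℕ) then 1 else 0) := by
  rw [Mfn, Mfn, filter_succ_card (fun j => k ≤ (π j : ℕ)) a, dif_pos h]

lemma Mfn_succ_ge (π : Equiv.Perm (Fin t)) (a k : ℕ) (h : ¬ a < t) :
    Mfn π (a + 1) k = Mfn π a k := by
  rw [Mfn, Mfn, filter_succ_card (fun j => k ≤ (π j : ℕ)) a, dif_neg h, add_zero]

lemma Mfn_k0 (π : Equiv.Perm (Fin t)) (a : ℕ) (ha : a ≤ t) : Mfn π a 0 = a := by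
  induction a with
  | zero => exact Mfn_zero π 0
  | succ a ih =>
      rw [Mfn_succ π a 0 (by omega), ih (by omega), if_pos (Nat.zero_le _)]

lemma Mfn_mono (π : Equiv.Perm (Fin t)) {a b : ℕ} (k : ℕ) (h : a ≤ b) :
    Mfn π a k ≤ Mfn π b k := by
  apply Finset.card_le_card
  intro j; simp only [mem_filter, mem_univ, true_and]; omega

lemma Mfn_top (π : Equiv.Perm (Fin t)) (k : ℕ) : Mfn π t k = t - k := by
  have h1 : (Finset.univ : Finset (Fin t)).filter (fun j : Fin t => (j : ℕ) < t ∧ k ≤ (π j : ℕ))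
      = (Finset.univ : Finset (Fin t)).filter (fun j : Fin t => k ≤ (π j : ℕ)) := by
    ext j
    simp only [mem_filter, mem_univ, true_and]
    exact ⟨fun h => h.2, fun h => ⟨j.isLt, h⟩⟩
  have h2 : ((Finset.univ : Finset (Fin t)).filter (fun j : Fin t => k ≤ (π j : ℕ))).card =
      ((Finset.univ : Finset (Fin t)).filter (fun v : Fin t => k ≤ (v : ℕ))).card := by
    apply Finset.card_bij (fun j _ => π j)
    · intro j hj; simp only [mem_filter, mem_univ, true_and] at *; exact hj
    · intro j₁ _ j₂ _ h; exact π.injective h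
    · intro v hv
      refine ⟨π.symm v, ?_, by simp⟩
      simp only [mem_filter, mem_univ, true_and] at *
      simpa using hv
  have h3 : ((Finset.univ : Finset (Fin t)).filter (fun v : Fin t => k ≤ (v : ℕ))).card = t - k := by
    by_cases hk : k < t
    · have : (Finset.univ : Finset (Fin t)).filter (fun v : Fin t => k ≤ (v : ℕ))
          = Finset.Ici (⟨k, hk⟩ : Fin t) := by
        ext v
        simp only [mem_filter, mem_univ, true_and, Finset.mem_Ici, Fin.le_def]
      rw [this, Fin.card_Ici]
    · have : (Finset.univ : Finset (Fin t)).filter (fun v : Fin t => k ≤ (v : ℕ)) = ∅ := by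
        ext v
        simp only [mem_filter, mem_univ, true_and, Finset.notMem_empty, iff_false]
        have := v.isLt
        omega
      rw [this]
      simp
      omega
  rw [Mfn, h1, h2, h3]
lemma Mfn_k_step (π : Equiv.Perm (Fin t)) (a k : ℕ) (ha : a ≤ t) :
    Mfn π a (k + 1) ≤ Mfn π a k ∧
      Mfn π a k = Mfn π a (k + 1) +
        (if h : k < t then (if ((π.symm ⟨k, h⟩ : Fin t) : ℕ) < a then 1 else 0) else 0) := by
  induction a with
  | zero => simp [Mfn_zero]
  | succ a ih =>
      have ha' : a < t := ha
      obtain ⟨ih1, ih2⟩ := ih (by omega)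
      rw [Mfn_succ π a (k+1) ha', Mfn_succ π a k ha']
      by_cases hkt : k < t
      · rw [dif_pos hkt] at ih2 ⊢
        by_cases hv : (π ⟨a, ha'⟩ : ℕ) = k
        · have hsymm : ((π.symm ⟨k, hkt⟩ : Fin t) : ℕ) = a := by
            have h2 : π ⟨a, ha'⟩ = ⟨k, hkt⟩ := Fin.ext hv
            rw [← h2, Equiv.symm_apply_apply]
          rw [hsymm] at ih2 ⊢
          split_ifs at ih2 ⊢ <;> omega
        · have hne : ((π.symm ⟨k, hkt⟩ : Fin t) : ℕ) ≠ a := by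
            intro h
            apply hv
            have h2 : π.symm ⟨k, hkt⟩ = ⟨a, ha'⟩ := Fin.ext h
            have h3 := congrArg π h2
            rw [Equiv.apply_symm_apply] at h3
            rw [← h3]
          split_ifs at ih2 ⊢ <;> omega
      · rw [dif_neg hkt] at ih2 ⊢
        have hlt : (π ⟨a, ha'⟩ : ℕ) < t := (π ⟨a, ha'⟩).isLt
        split_ifs at ih2 ⊢ <;> omega

lemma Mfn_k_le (π : Equiv.Perm (Fin t)) (a k : ℕ) (ha : a ≤ t) :
    Mfn π a (k + 1) ≤ Mfn π a k := (Mfn_k_step π a k ha).1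

lemma Mfn_k_ge (π : Equiv.Perm (Fin t)) (a k : ℕ) (ha : a ≤ t) :
    Mfn π a k ≤ Mfn π a (k + 1) + 1 := by
  have := (Mfn_k_step π a k ha).2
  split_ifs at this <;> omega

lemma Mfn_strict (π : Equiv.Perm (Fin t)) {i : Fin t} {a k : ℕ} (hk : k ≤ (π i : ℕ))
    (hia : (i : ℕ) < a) : Mfn π ((i : ℕ) + 1) k ≤ Mfn π a k ∧ Mfn π (i : ℕ) k < Mfn π ((i : ℕ) + 1) k := by
  constructor
  · exact Mfn_mono π k (by omega)
  · rw [Mfn_succ π (i : ℕ) k i.isLt]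
    rw [if_pos (by simpa using hk)]
    omega

lemma Mfn_pos (π : Equiv.Perm (Fin t)) {i : Fin t} {k : ℕ} (hk : k ≤ (π i : ℕ)) :
    1 ≤ Mfn π ((i : ℕ) + 1) k := by
  have := (Mfn_strict π hk (Nat.lt_succ_self _)).2
  omega

lemma Mfn_le (π : Equiv.Perm (Fin t)) (a k : ℕ) (ha : a ≤ t) :
    Mfn π a k ≤ t - k := by
  have := Mfn_mono π (b := t) k ha
  rwa [Mfn_top] at this

lemma exists_Mfn (π : Equiv.Perm (Fin t)) (k m : ℕ) (hm : 1 ≤ m) (hmk : m ≤ t - k) :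
    ∃ i : Fin t, k ≤ (π i : ℕ) ∧ Mfn π ((i : ℕ) + 1) k = m := by
  suffices h : ∀ a : ℕ, a ≤ t → ∀ m, 1 ≤ m → m ≤ Mfn π a k →
      ∃ i : Fin t, k ≤ (π i : ℕ) ∧ Mfn π ((i : ℕ) + 1) k = m by
    exact h t le_rfl m hm (by rwa [Mfn_top])
  intro a
  induction a with
  | zero => intro _ m h1 h2; rw [Mfn_zero] at h2; omega
  | succ a ih =>
      intro ha m h1 h2
      have ha' : a < t := ha
      rw [Mfn_succ π a k ha'] at h2
      by_cases hm2 : m ≤ Mfn π a k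
      · exact ih (by omega) m h1 hm2
      · have hk : k ≤ (π ⟨a, ha'⟩ : ℕ) := by
          by_contra hc
          rw [if_neg hc] at h2; omega
        rw [if_pos hk] at h2
        refine ⟨⟨a, ha'⟩, hk, ?_⟩
        show Mfn π (a + 1) k = m
        rw [Mfn_succ π a k ha', if_pos hk]
        omega

lemma Mfn_k_anti (π : Equiv.Perm (Fin t)) (a : ℕ) {k k' : ℕ} (h : k ≤ k') :
    Mfn π a k' ≤ Mfn π a k := by
  apply Finset.card_le_card
  intro j
  simp only [mem_filter, mem_univ, true_and]
  omega

lemma Mfn_le_a (π : Equiv.Perm (Fin t)) (a k : ℕ) (ha : a ≤ t) : Mfn π a k ≤ a := by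
  have := Mfn_k_anti π a (Nat.zero_le k)
  rwa [Mfn_k0 π a ha] at this

def stepsOf (π : Equiv.Perm (Fin t)) (i : Fin t) : List Bool :=
  (List.range (π i : ℕ)).map fun k =>
    decide (Mfn π ((i : ℕ) + 1) (k + 1) < Mfn π ((i : ℕ) + 1) k)

lemma length_stepsOf (π : Equiv.Perm (Fin t)) (i : Fin t) :
    (stepsOf π i).length = (π i : ℕ) := by simp [stepsOf]

lemma count_range (π : Equiv.Perm (Fin t)) (i : Fin t) (k : ℕ) :
    ((List.range k).map fun j =>
        decide (Mfn π ((i : ℕ) + 1) (j + 1) < Mfn π ((i : ℕ) + 1) j)).count true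
      + Mfn π ((i : ℕ) + 1) k = (i : ℕ) + 1 := by
  induction k with
  | zero => simp [Mfn_k0 π ((i : ℕ) + 1) i.isLt]
  | succ k ih =>
      rw [List.range_succ, List.map_append, List.count_append]
      have h1 := Mfn_k_le π ((i : ℕ) + 1) k i.isLt
      have h2 := Mfn_k_ge π ((i : ℕ) + 1) k i.isLt
      simp only [List.map_cons, List.map_nil, List.count_singleton]
      by_cases h : Mfn π ((i : ℕ) + 1) (k + 1) < Mfn π ((i : ℕ) + 1) k
      · rw [if_pos (by simp [h])]
        omega
      · rw [if_neg (by simp [h])]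
        omega

lemma count_take_stepsOf (π : Equiv.Perm (Fin t)) (i : Fin t) {k : ℕ} (hk : k ≤ (π i : ℕ)) :
    (((stepsOf π i).take k).count true) + Mfn π ((i : ℕ) + 1) k = (i : ℕ) + 1 := by
  have : (stepsOf π i).take k = (List.range k).map fun j =>
      decide (Mfn π ((i : ℕ) + 1) (j + 1) < Mfn π ((i : ℕ) + 1) j) := by
    rw [stepsOf, ← List.map_take, List.take_range]
    congr 1
    rw [Nat.min_eq_left hk]
  rw [this, count_range]

lemma mem_stepsOf_iff (π : Equiv.Perm (Fin t)) (i : Fin t) (q : ℤ × ℤ) :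
    q ∈ wormPath (((i : ℕ) : ℤ) + 1, (t : ℤ) - (i : ℕ)) (stepsOf π i) ↔
      ∃ k ≤ (π i : ℕ), q = ((Mfn π ((i : ℕ) + 1) k : ℤ),
        (t : ℤ) + 1 - k - Mfn π ((i : ℕ) + 1) k) := by
  rw [mem_wormPath_iff, length_stepsOf]
  apply exists_congr
  intro k
  constructor
  · rintro ⟨hk, rfl⟩
    refine ⟨hk, ?_⟩
    have hc := count_take_stepsOf π i hk
    have hle : Mfn π ((i : ℕ) + 1) k ≤ (i : ℕ) + 1 := Mfn_le_a π _ _ i.isLt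
    apply Prod.ext <;> simp only [] <;> push_cast <;> omega
  · rintro ⟨hk, rfl⟩
    refine ⟨hk, ?_⟩
    have hc := count_take_stepsOf π i hk
    have hle : Mfn π ((i : ℕ) + 1) k ≤ (i : ℕ) + 1 := Mfn_le_a π _ _ i.isLt
    apply Prod.ext <;> simp only [] <;> push_cast <;> omega

def diagram (π : Equiv.Perm (Fin t)) : WormDiagram t where
  steps := stepsOf π
  lengths_perm := ⟨π, length_stepsOf π⟩
  cover := by
    intro p
    constructor
    · rintro ⟨h1, h2, h3⟩
      obtain ⟨k, hk⟩ : ∃ k : ℕ, (k : ℤ) = (t : ℤ) + 1 - (p.1 + p.2) :=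
        ⟨((t : ℤ) + 1 - (p.1 + p.2)).toNat, by omega⟩
      obtain ⟨m, hm⟩ : ∃ m : ℕ, (m : ℤ) = p.1 := ⟨p.1.toNat, by omega⟩
      obtain ⟨i, hi, hMi⟩ := exists_Mfn π k m (by omega) (by omega)
      refine ⟨i, (mem_stepsOf_iff π i p).mpr ⟨k, hi, ?_⟩⟩
      rw [hMi]
      apply Prod.ext <;> simp only [] <;> omega
    · rintro ⟨i, hp⟩
      rw [mem_stepsOf_iff] at hp
      obtain ⟨k, hk, rfl⟩ := hp
      have hpos := Mfn_pos π hk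
      have hub : Mfn π ((i : ℕ) + 1) k ≤ t - k := Mfn_le π _ _ i.isLt
      have hkt : k < t := lt_of_le_of_lt hk (π i).isLt
      refine ⟨by simp only []; omega, by simp only []; push_cast; omega,
        by simp only []; push_cast; omega⟩
  disjoint := by
    intro i j hij p hpi hpj
    rw [mem_stepsOf_iff] at hpi hpj
    obtain ⟨k, hk, rfl⟩ := hpi
    obtain ⟨l, hl, heq⟩ := hpj
    have hfst := congrArg Prod.fst heq
    have hsnd := congrArg Prod.snd heq
    simp only [] at hfst hsnd
    have hkl : k = l := by omega
    subst hkl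
    rcases lt_trichotomy i j with h | h | h
    · have hlt : Mfn π (j : ℕ) k < Mfn π ((j : ℕ) + 1) k :=
        (Mfn_strict π hl (Nat.lt_succ_self _)).2
      have hle : Mfn π ((i : ℕ) + 1) k ≤ Mfn π (j : ℕ) k :=
        Mfn_mono π k (by exact Fin.lt_def.mp h)
      omega
    · exact hij h
    · have hlt : Mfn π (i : ℕ) k < Mfn π ((i : ℕ) + 1) k :=
        (Mfn_strict π hk (Nat.lt_succ_self _)).2
      have hle : Mfn π ((j : ℕ) + 1) k ≤ Mfn π (i : ℕ) k :=
        Mfn_mono π k (by exact Fin.lt_def.mp h)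
      omega

lemma rank_lemma (S : Finset (Fin t)) (f : Fin t → ℤ)
    (hmono : ∀ i ∈ S, ∀ j ∈ S, i < j → f i < f j)
    (hlb : ∀ i ∈ S, 1 ≤ f i) (hub : ∀ i ∈ S, f i ≤ (S.card : ℤ)) :
    ∀ i ∈ S, f i = ((S.filter (fun j => j ≤ i)).card : ℤ) := by
  intro i hi
  have hinj : ∀ j₁ ∈ S, ∀ j₂ ∈ S, f j₁ = f j₂ → j₁ = j₂ := by
    intro j₁ h₁ j₂ h₂ h
    rcases lt_trichotomy j₁ j₂ with hc | hc | hc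
    · exact absurd h (ne_of_lt (hmono _ h₁ _ h₂ hc))
    · exact hc
    · exact absurd h.symm (ne_of_lt (hmono _ h₂ _ h₁ hc))
  set L := S.filter (fun j => j ≤ i) with hLdef
  set U := S.filter (fun j => i ≤ j) with hUdef
  have hcards : L.card + U.card = S.card + 1 := by
    have h1 : L ∪ U = S := by
      ext j
      simp only [hLdef, hUdef, Finset.mem_union, Finset.mem_filter]
      constructor
      · rintro (⟨h, _⟩ | ⟨h, _⟩) <;> exact h
      · intro h
        rcases le_total j i with hle | hle
        · exact Or.inl ⟨h, hle⟩
        · exact Or.inr ⟨h, hle⟩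
    have h2 : L ∩ U = {i} := by
      ext j
      simp only [hLdef, hUdef, Finset.mem_inter, Finset.mem_filter, Finset.mem_singleton]
      constructor
      · rintro ⟨⟨_, ha⟩, ⟨_, hb⟩⟩
        exact le_antisymm ha hb
      · rintro rfl
        exact ⟨⟨hi, le_rfl⟩, ⟨hi, le_rfl⟩⟩
    have h3 := Finset.card_union_add_card_inter L U
    rw [h1, h2, Finset.card_singleton] at h3
    omega
  have hLinj : Set.InjOn f L := by
    intro a ha b hb h
    exact hinj a (Finset.mem_filter.mp ha).1 b (Finset.mem_filter.mp hb).1 h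
  have hUinj : Set.InjOn f U := by
    intro a ha b hb h
    exact hinj a (Finset.mem_filter.mp ha).1 b (Finset.mem_filter.mp hb).1 h
  have hfi1 : 1 ≤ f i := hlb _ hi
  have hfiS : f i ≤ (S.card : ℤ) := hub _ hi
  have hL : (L.card : ℤ) ≤ f i := by
    have himg : L.image f ⊆ Finset.Icc 1 (f i) := by
      intro v hv
      simp only [Finset.mem_image] at hv
      obtain ⟨j, hj, rfl⟩ := hv
      rw [hLdef, Finset.mem_filter] at hj
      refine Finset.mem_Icc.mpr ⟨hlb _ hj.1, ?_⟩
      rcases eq_or_lt_of_le hj.2 with h | h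
      · rw [h]
      · exact le_of_lt (hmono _ hj.1 _ hi h)
    have hcard := Finset.card_le_card himg
    rw [Finset.card_image_of_injOn hLinj, Int.card_Icc] at hcard
    omega
  have hU : (U.card : ℤ) ≤ (S.card : ℤ) + 1 - f i := by
    have himg : U.image f ⊆ Finset.Icc (f i) (S.card : ℤ) := by
      intro v hv
      simp only [Finset.mem_image] at hv
      obtain ⟨j, hj, rfl⟩ := hv
      rw [hUdef, Finset.mem_filter] at hj
      refine Finset.mem_Icc.mpr ⟨?_, hub _ hj.1⟩
      rcases eq_or_lt_of_le hj.2 with h | h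
      · rw [← h]
      · exact le_of_lt (hmono _ hi _ hj.1 h)
    have hcard := Finset.card_le_card himg
    rw [Finset.card_image_of_injOn hUinj, Int.card_Icc] at hcard
    omega
  omega

lemma xpos_eq (π : Equiv.Perm (Fin t)) (W : WormDiagram t)
    (hW : ∀ i, (W.steps i).length = (π i : ℕ)) :
    ∀ (k : ℕ) (i : Fin t), k ≤ (π i : ℕ) →
      ((i : ℕ) : ℤ) + 1 - ((W.steps i).take k).count true
        = (Mfn π ((i : ℕ) + 1) k : ℤ) := by
  have hmem : ∀ (j : Fin t) (k' : ℕ), k' ≤ (π j : ℕ) →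
      (((j : ℕ) : ℤ) + 1 - (((W.steps j).take k').count true : ℕ),
        ((t : ℤ) - (j : ℕ)) - ((k' : ℤ) - (((W.steps j).take k').count true : ℕ)))
        ∈ wormPath (((j : ℕ) : ℤ) + 1, (t : ℤ) - (j : ℕ)) (W.steps j) := by
    intro j k' hk'
    rw [mem_wormPath_iff]
    exact ⟨k', by rw [hW]; exact hk', rfl⟩
  have hcount : ∀ (j : Fin t) (k' : ℕ),
      ((W.steps j).take k').count true ≤ ((W.steps j).take (k' + 1)).count true ∧
      ((W.steps j).take (k' + 1)).count true ≤ ((W.steps j).take k').count true + 1 := by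
    intro j k'
    rw [List.take_succ, List.count_append]
    have h1 : ((W.steps j)[k']?).toList.count true ≤ 1 := by
      cases h : (W.steps j)[k']? with
      | none => simp
      | some b => simp [List.count_singleton]; cases b <;> simp
    omega
  intro k
  induction k with
  | zero =>
      intro i hi
      rw [List.take_zero, Mfn_k0 π _ i.isLt]
      simp
  | succ k ih =>
      intro i hi
      set A := Finset.univ.filter (fun j : Fin t => k + 1 ≤ (π j : ℕ)) with hA
      have hAcard : A.card = t - (k + 1) := by
        have hAeq : A = Finset.univ.filter
            (fun j : Fin t => (j : ℕ) < t ∧ k + 1 ≤ (π j : ℕ)) := by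
          ext j
          simp only [hA, Finset.mem_filter, Finset.mem_univ, true_and]
          exact ⟨fun h => ⟨j.isLt, h⟩, fun h => h.2⟩
        rw [hAeq]
        exact Mfn_top π (k + 1)
      have hbounds : ∀ j ∈ A,
          1 ≤ ((j : ℕ) : ℤ) + 1 - (((W.steps j).take (k + 1)).count true : ℕ) ∧
          ((j : ℕ) : ℤ) + 1 - (((W.steps j).take (k + 1)).count true : ℕ) + 1 + k ≤ t := by
        intro j hj
        rw [hA, Finset.mem_filter] at hj
        have hm := hmem j (k + 1) hj.2
        obtain ⟨b1, b2, b3⟩ := (W.cover _).mpr ⟨j, hm⟩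
        simp only [] at b1 b2 b3
        constructor <;> push_cast at b1 b2 b3 ⊢ <;> omega
      have hmono : ∀ j₁ ∈ A, ∀ j₂ ∈ A, j₁ < j₂ →
          ((j₁ : ℕ) : ℤ) + 1 - (((W.steps j₁).take (k + 1)).count true : ℕ) <
          ((j₂ : ℕ) : ℤ) + 1 - (((W.steps j₂).take (k + 1)).count true : ℕ) := by
        intro j₁ h₁ j₂ h₂ hlt
        rw [hA, Finset.mem_filter] at h₁ h₂
        have hk₁ : k ≤ (π j₁ : ℕ) := by omega
        have hk₂ : k ≤ (π j₂ : ℕ) := by omega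
        have e₁ := ih j₁ hk₁
        have e₂ := ih j₂ hk₂
        have hc₁ := hcount j₁ k
        have hc₂ := hcount j₂ k
        have hmm : Mfn π ((j₁ : ℕ) + 1) k ≤ Mfn π (j₂ : ℕ) k :=
          Mfn_mono π k (Fin.lt_def.mp hlt)
        have hstrict : Mfn π (j₂ : ℕ) k < Mfn π ((j₂ : ℕ) + 1) k :=
          (Mfn_strict π hk₂ (Nat.lt_succ_self _)).2
        have hne : ((j₁ : ℕ) : ℤ) + 1 - (((W.steps j₁).take (k + 1)).count true : ℕ) ≠
            ((j₂ : ℕ) : ℤ) + 1 - (((W.steps j₂).take (k + 1)).count true : ℕ) := by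
          intro hEq
          apply W.disjoint j₁ j₂ (ne_of_lt hlt) _ (hmem j₁ (k + 1) h₁.2)
          have hT : ((((j₁ : ℕ) : ℤ) + 1 - (((W.steps j₁).take (k + 1)).count true : ℕ),
              ((t : ℤ) - (j₁ : ℕ)) - (((k + 1 : ℕ) : ℤ)
                - (((W.steps j₁).take (k + 1)).count true : ℕ))) : ℤ × ℤ) =
              ((((j₂ : ℕ) : ℤ) + 1 - (((W.steps j₂).take (k + 1)).count true : ℕ),
              ((t : ℤ) - (j₂ : ℕ)) - (((k + 1 : ℕ) : ℤ)
                - (((W.steps j₂).take (k + 1)).count true : ℕ))) : ℤ × ℤ) := by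
            apply Prod.ext
            · simp only []
              omega
            · simp only []
              omega
          rw [hT]
          exact hmem j₂ (k + 1) h₂.2
        omega
      have key := rank_lemma A
        (fun j => ((j : ℕ) : ℤ) + 1 - (((W.steps j).take (k + 1)).count true : ℕ))
        hmono
        (fun j hj => (hbounds j hj).1)
        (fun j hj => by
          have h1 := (hbounds j hj).2
          have h2 : k + 1 ≤ (π j : ℕ) := by
            have := Finset.mem_filter.mp (hA ▸ hj)
            exact this.2
          have h3 : k + 1 < t := lt_of_le_of_lt h2 (π j).isLt
          rw [hAcard]
          push_cast
          omega)
        i (by simp [hA, hi]; omega)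
      rw [key]
      have hfilter : (A.filter (fun j => j ≤ i)).card = Mfn π ((i : ℕ) + 1) (k + 1) := by
        rw [Mfn]
        congr 1
        rw [hA, Finset.filter_filter]
        ext j
        simp only [Finset.mem_filter, Finset.mem_univ, true_and, Fin.le_def]
        omega
      rw [hfilter]

lemma steps_eq (π : Equiv.Perm (Fin t)) (W : WormDiagram t)
    (hW : ∀ i, (W.steps i).length = (π i : ℕ)) : W.steps = stepsOf π := by
  funext i
  apply List.ext_getElem (by rw [hW, length_stepsOf])
  intro k hk₁ hk₂
  have hk : k + 1 ≤ (π i : ℕ) := by rw [hW] at hk₁; omega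
  have e₁ := xpos_eq π W hW k i (by omega)
  have e₂ := xpos_eq π W hW (k + 1) i hk
  have hsplit : ((W.steps i).take (k + 1)).count true =
      ((W.steps i).take k).count true + (if (W.steps i)[k] = true then 1 else 0) := by
    rw [List.take_succ, List.count_append, List.getElem?_eq_getElem hk₁]
    cases h : (W.steps i)[k] <;> simp [h]
  have hM1 := Mfn_k_le π ((i : ℕ) + 1) k i.isLt
  have hM2 := Mfn_k_ge π ((i : ℕ) + 1) k i.isLt
  have hRHS : (stepsOf π i)[k] =
      decide (Mfn π ((i : ℕ) + 1) (k + 1) < Mfn π ((i : ℕ) + 1) k) := by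
    simp [stepsOf]
  rw [hRHS]
  by_cases hP : Mfn π ((i : ℕ) + 1) (k + 1) < Mfn π ((i : ℕ) + 1) k
  · rw [decide_eq_true hP]
    by_contra hb
    rw [Bool.not_eq_true] at hb
    rw [hsplit, hb] at e₂
    simp only [if_neg Bool.false_ne_true, Nat.add_zero] at e₂
    omega
  · rw [decide_eq_false hP]
    by_contra hb
    rw [Bool.not_eq_false] at hb
    rw [hsplit, hb] at e₂
    simp only [if_pos rfl] at e₂
    push_cast at e₁ e₂
    omega

lemma eq_diagram (π : Equiv.Perm (Fin t)) (W : WormDiagram t)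
    (hW : ∀ i, (W.steps i).length = (π i : ℕ)) : W = diagram π := by
  have hs := steps_eq π W hW
  obtain ⟨s, lp, c, d⟩ := W
  simp only [] at hs
  subst hs
  rfl

end Worm

/-- For each `σ ∈ S_t` there is exactly one worm diagram of size `t` whose `i`-th worm
has length `t + 1 - σ(i)` (with `σ(i) ∈ {1,...,t}` encoded as `(σ i : ℕ) + 1`);
hence the number of worm diagrams of size `t` (equivalently, of full exceptional
sequences of `A_t`-modules) is `t!`. -/
theorem wormDiagram_bijection (t : ℕ) :
    (∀ σ : Equiv.Perm (Fin t),
      ∃! W : WormDiagram t, ∀ i : Fin t,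
        (W.steps i).length + 1 = t - (σ i : ℕ)) ∧
    Nat.card (WormDiagram t) = Nat.factorial t := by
  have hrev : ∀ (σ : Equiv.Perm (Fin t)) (i : Fin t),
      ((σ.trans Fin.revPerm) i : ℕ) = t - 1 - (σ i : ℕ) := by
    intro σ i
    simp only [Equiv.trans_apply, Fin.revPerm_apply, Fin.val_rev]
    omega
  constructor
  · intro σ
    refine ⟨diagram (σ.trans Fin.revPerm), ?_, ?_⟩
    · intro i
      show (stepsOf (σ.trans Fin.revPerm) i).length + 1 = t - (σ i : ℕ)
      have h2 := (σ i).isLt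
      rw [length_stepsOf, hrev σ i]
      omega
    · intro W hWp
      apply eq_diagram
      intro i
      have h2 := (σ i).isLt
      have h3 := hWp i
      rw [hrev σ i]
      omega
  · have hbij : Function.Bijective (fun π : Equiv.Perm (Fin t) => diagram π) := by
      constructor
      · intro π₁ π₂ h
        simp only [] at h
        apply Equiv.ext
        intro i
        apply Fin.ext
        have h1 : (stepsOf π₁ i).length = (stepsOf π₂ i).length := by
          have h2 := congrArg WormDiagram.steps h
          rw [show stepsOf π₁ = (diagram π₁).steps from rfl,
            show stepsOf π₂ = (diagram π₂).steps from rfl, h2]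
        rwa [length_stepsOf, length_stepsOf] at h1
      · intro W
        obtain ⟨π, hπ⟩ := W.lengths_perm
        exact ⟨π, (eq_diagram π W hπ).symm⟩
    rw [← Nat.card_eq_of_bijective _ hbij, Nat.card_eq_fintype_card,
      Fintype.card_perm, Fintype.card_fin]
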